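/- Let τ > 0, ε > 0, c > 0 be real numbers. If λ = p + iq is a complex number with p ≥ 0 and |q| < π/(2ε) satisfying e^{2λ}(1 + 2c e^{−ελ}) = −1, then a contradiction follows; i.e., the equation e^{2λ} + 2c e^{(2−ε)λ} + 1 = 0 has no root λ with Re λ ≥ 0 and |Im λ| < π/(2ε). -/

import Mathlib

open Complex Real

theorem stmt_9 (ε c p q : ℝ) (hε : 0 < ε) (hc : 0 < c) (hp : 0 ≤ p)
    (hq : |q| < π / (2 * ε)) :
    ¬ (Complex.exp (2 * (p + q * Complex.I)) *
        (1 + 2 * (c : ℂ) * Complex.exp (-(ε : ℂ) * (p + q * Complex.I))) = -1) := by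
  intro h
  set w : ℂ := 2 * (c : ℂ) * Complex.exp (-(ε : ℂ) * (p + q * Complex.I)) with hw
  have habs : ‖Complex.exp (2 * (p + q * Complex.I))‖ * ‖1 + w‖ = 1 := by
    rw [← norm_mul, h]; simp
  have h1 : ‖Complex.exp (2 * (p + q * Complex.I))‖ = Real.exp (2 * p) := by
    rw [Complex.norm_exp]
    congr 1
    simp [Complex.mul_re]
  have h1' : (1 : ℝ) ≤ Real.exp (2 * p) := by
    rw [show (1:ℝ) = Real.exp 0 from (Real.exp_zero).symm]
    exact Real.exp_le_exp.mpr (by linarith)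
  have habs2 : |ε * q| < π / 2 := by
    rw [abs_mul, abs_of_pos hε]
    calc ε * |q| < ε * (π / (2 * ε)) := mul_lt_mul_of_pos_left hq hε
      _ = π / 2 := by field_simp
  have hcos : 0 < Real.cos (ε * q) := by
    apply Real.cos_pos_of_mem_Ioo
    have := abs_lt.mp habs2
    constructor <;> linarith [this.1, this.2]
  have hwre : w.re = 2 * c * (Real.exp (-(ε * p)) * Real.cos (ε * q)) := by
    rw [hw]
    simp [Complex.mul_re, Complex.mul_im, Complex.exp_re, Complex.exp_im, Real.cos_neg]
  have hwrepos : 0 < w.re := by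
    rw [hwre]; positivity
  have h2 : 1 < ‖1 + w‖ := by
    have hsq : 1 ^ 2 < ‖1 + w‖ ^ 2 := by
      rw [one_pow, Complex.sq_norm, Complex.normSq_apply]
      have hre : (1 + w).re = 1 + w.re := by simp
      rw [hre]
      nlinarith [mul_self_nonneg (1 + w).im, mul_self_nonneg w.re, hwrepos]
    exact lt_of_pow_lt_pow_left₀ 2 (norm_nonneg _) hsq
  rw [h1] at habs
  have : (1:ℝ) < Real.exp (2 * p) * ‖1 + w‖ := by
    calc (1:ℝ) < ‖1 + w‖ := h2
      _ = 1 * ‖1 + w‖ := (one_mul _).symm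
      _ ≤ Real.exp (2 * p) * ‖1 + w‖ :=
          mul_le_mul_of_nonneg_right h1' (norm_nonneg _)
  linarith
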